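/- Let f₁, …, f_m : ℝⁿ → ℝ be differentiable functions with gradients ∇f_i, such that: (a) f_i(y) ≥ 0 for all y and all i; (b) each ∇f_i is Lipschitz with constant L_i ≥ 0, i.e., ‖∇f_i(y) − ∇f_i(z)‖ ≤ L_i·‖y − z‖ for all y, z; and set f = Σ_{i=1}^m f_i. Fix x ∈ ℝⁿ and suppose there exist x* ∈ ℝⁿ and γ > 0 with f(x*) = 0 and the quasi strong convexity bound f(x) − f(x*) ≤ ⟨∇f(x), x − x*⟩ − (γ/2)‖x − x*‖². Let the stepsize α > 0 satisfy 2·α·(Σ_{ℓ=1}^m L_ℓ)·(Σ_{i=1}^m L_i²) ≤ γ². For each pair (i,j) ∈ [m]×[n], define x⁺(i,j) ∈ ℝⁿ by x⁺(i,j)_j = x_j − α·(∇f_i(x))_j and x⁺(i,j)_k = x_k for k ≠ j. Then (1/(m·n))·Σ_{i=1}^m Σ_{j=1}^n f(x⁺(i,j)) ≤ (1 − α·γ/(m·n))·f(x). (Theorem 5: linear convergence of the doubly stochastic gradient algorithm.) -/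

import Mathlib

open BigOperators

section Aux
variable {E : Type*} [NormedAddCommGroup E] [InnerProductSpace ℝ E] [CompleteSpace E]

lemma dsg_descent_lemma (f : E → ℝ) (g : E → E)
    (hg : ∀ y, HasGradientAt f (g y) y) {L : ℝ}
    (hlip : ∀ y z, ‖g y - g z‖ ≤ L * ‖y - z‖) (a v : E) :
    f (a + v) ≤ f a + (inner ℝ (g a) v : ℝ) + L / 2 * ‖v‖ ^ 2 := by
  set φ : ℝ → ℝ := fun s => f (a + s • v) with hφ
  have hline : ∀ s : ℝ, HasDerivAt (fun t : ℝ => a + t • v) v s := by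
    intro s
    simpa using ((hasDerivAt_id s).smul_const v).const_add a
  have hφ' : ∀ s : ℝ, HasDerivAt φ (inner ℝ (g (a + s • v)) v : ℝ) s := by
    intro s
    have h1 := ((hg (a + s • v)).hasFDerivAt).comp_hasDerivAt s (hline s)
    simp [InnerProductSpace.toDual_apply_apply] at h1
    exact h1
  set ψ : ℝ → ℝ := fun s => f a + s * (inner ℝ (g a) v : ℝ) + L / 2 * s ^ 2 * ‖v‖ ^ 2 - φ s with hψ
  have hψ' : ∀ s : ℝ, HasDerivAt ψ
      ((inner ℝ (g a) v : ℝ) + L * s * ‖v‖ ^ 2 - (inner ℝ (g (a + s • v)) v : ℝ)) s := by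
    intro s
    have h2 : HasDerivAt (fun s : ℝ => f a + s * (inner ℝ (g a) v : ℝ) + L / 2 * s ^ 2 * ‖v‖ ^ 2)
        ((inner ℝ (g a) v : ℝ) + L * s * ‖v‖ ^ 2) s := by
      have h := (((hasDerivAt_id s).mul_const (inner ℝ (g a) v : ℝ)).const_add (f a)).add
        (((hasDerivAt_pow 2 s).const_mul (L / 2)).mul_const (‖v‖ ^ 2))
      refine h.congr_deriv ?_
      push_cast
      ring
    exact h2.sub (hφ' s)
  have key : ∀ s : ℝ, 0 ≤ s →
      0 ≤ (inner ℝ (g a) v : ℝ) + L * s * ‖v‖ ^ 2 - (inner ℝ (g (a + s • v)) v : ℝ) := by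
    intro s hs
    have h3 : (inner ℝ (g (a + s • v)) v : ℝ) - (inner ℝ (g a) v : ℝ)
        = (inner ℝ (g (a + s • v) - g a) v : ℝ) := by simp [inner_sub_left]
    have h4 : (inner ℝ (g (a + s • v) - g a) v : ℝ) ≤ ‖g (a + s • v) - g a‖ * ‖v‖ :=
      real_inner_le_norm _ _
    have h5 : ‖g (a + s • v) - g a‖ ≤ L * (s * ‖v‖) := by
      have := hlip (a + s • v) a
      simpa [norm_smul, abs_of_nonneg hs, mul_assoc] using this
    nlinarith [norm_nonneg v, norm_nonneg (g (a + s • v) - g a)]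
  have hmono : MonotoneOn ψ (Set.Ici (0:ℝ)) := by
    apply monotoneOn_of_deriv_nonneg (convex_Ici 0)
    · exact fun s _ => (hψ' s).continuousAt.continuousWithinAt
    · exact fun s _ => ((hψ' s).differentiableAt).differentiableWithinAt
    · intro s hs
      rw [interior_Ici] at hs
      rw [(hψ' s).deriv]
      exact key s (le_of_lt hs)
  have h01 : ψ 0 ≤ ψ 1 := hmono (by simp) (by norm_num) (by norm_num)
  simp only [hψ, hφ] at h01
  simp only [zero_smul, add_zero, one_smul] at h01
  nlinarith [h01]

lemma dsg_grad_zero_of_min (f : E → ℝ) (g : E) (x : E) (h : HasGradientAt f g x)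
    (hmin : ∀ y, f x ≤ f y) : g = 0 := by
  have h0 : IsLocalMin f x := Filter.Eventually.of_forall hmin
  have h1 := h0.hasFDerivAt_eq_zero h.hasFDerivAt
  simpa using (InnerProductSpace.toDual ℝ E).map_eq_zero_iff.mp h1

end Aux

/-- Theorem 5: linear convergence of the doubly stochastic gradient
algorithm. With `f = Σᵢ fᵢ`, where each `fᵢ : ℝⁿ → ℝ` is nonnegative with `Lᵢ`-Lipschitz
gradient `gᵢ`, if `f(x*) = 0`, `f` is quasi strongly convex at `x` towards `x*` with
modulus `γ > 0`, and the stepsize `α > 0` satisfies `2 α (Σ Lℓ)(Σ Lᵢ²) ≤ γ²`, then the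
expected value of `f` after one doubly stochastic gradient step from `x` is at most
`(1 - αγ/(mn)) f(x)`. -/
theorem dsg_linear_rate {m n : ℕ}
    (f : Fin m → EuclideanSpace ℝ (Fin n) → ℝ)
    (g : Fin m → EuclideanSpace ℝ (Fin n) → EuclideanSpace ℝ (Fin n))
    (hgrad : ∀ i y, HasGradientAt (f i) (g i y) y)
    (hnonneg : ∀ i y, 0 ≤ f i y)
    (L : Fin m → ℝ) (hL : ∀ i, 0 ≤ L i)
    (hlip : ∀ i y z, ‖g i y - g i z‖ ≤ L i * ‖y - z‖)
    (x xstar : EuclideanSpace ℝ (Fin n)) (γ : ℝ) (hγ : 0 < γ)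
    (hmin : ∑ i, f i xstar = 0)
    (hqsc : ∑ i, f i x - ∑ i, f i xstar ≤
      (inner ℝ (∑ i, g i x) (x - xstar) : ℝ) - γ / 2 * ‖x - xstar‖ ^ 2)
    (α : ℝ) (hα : 0 < α)
    (hstep : 2 * α * (∑ l, L l) * (∑ i, L i ^ 2) ≤ γ ^ 2) :
    (1 / ((m : ℝ) * n)) *
        ∑ i, ∑ j, (∑ l, f l (WithLp.toLp 2 (Function.update x j (x j - α * g i x j)))) ≤
      (1 - α * γ / ((m : ℝ) * n)) * ∑ i, f i x := by
  have hnorm : ∀ v : EuclideanSpace ℝ (Fin n), ‖v‖ ^ 2 = ∑ j, (v j) ^ 2 := by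
    intro v
    rw [EuclideanSpace.norm_eq, Real.sq_sqrt (by positivity)]
    simp [sq_abs]
  set F : ℝ := ∑ i, f i x with hF
  set G : EuclideanSpace ℝ (Fin n) := ∑ i, g i x with hG
  set t : ℝ := ‖x - xstar‖ with ht
  set S : ℝ := ∑ l, L l with hS
  set Q2 : ℝ := ∑ i, L i ^ 2 with hQ2
  have hF0 : 0 ≤ F := Finset.sum_nonneg fun i _ => hnonneg i x
  have hS0 : 0 ≤ S := Finset.sum_nonneg fun i _ => hL i
  have hQ20 : 0 ≤ Q2 := Finset.sum_nonneg fun i _ => sq_nonneg _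
  have ht0 : 0 ≤ t := norm_nonneg _
  -- each f i xstar = 0, hence g i xstar = 0
  have hstar : ∀ i, f i xstar = 0 := by
    intro i
    exact (Finset.sum_eq_zero_iff_of_nonneg (fun i _ => hnonneg i xstar)).mp hmin i
      (Finset.mem_univ i)
  have hgstar : ∀ i, g i xstar = 0 := by
    intro i
    refine dsg_grad_zero_of_min (f i) _ _ (hgrad i xstar) fun y => ?_
    rw [hstar i]; exact hnonneg i y
  have hgb : ∀ i, ‖g i x‖ ≤ L i * t := by
    intro i
    simpa [hgstar i] using hlip i x xstar
  -- rewrite the update as x + c • e_j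
  have hupd : ∀ (i : Fin m) (j : Fin n), WithLp.toLp 2 (Function.update x j (x j - α * g i x j))
      = x + (-(α * g i x j)) • EuclideanSpace.single j (1 : ℝ) := by
    intro i j
    ext k
    by_cases hk : k = j
    · subst hk
      simp [PiLp.add_apply, PiLp.smul_apply, EuclideanSpace.single_apply]
      ring
    · simp [Function.update_of_ne hk, PiLp.add_apply, PiLp.smul_apply,
        EuclideanSpace.single_apply, hk]
  -- descent lemma per term
  have hdes : ∀ (i : Fin m) (j : Fin n) (l : Fin m),
      f l (WithLp.toLp 2 (Function.update x j (x j - α * g i x j))) ≤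
        f l x - (α * g i x j) * g l x j + L l / 2 * (α * g i x j) ^ 2 := by
    intro i j l
    have h := dsg_descent_lemma (f l) (g l) (hgrad l) (hlip l) x
      ((-(α * g i x j)) • EuclideanSpace.single j (1 : ℝ))
    rw [hupd i j]
    have hin : (inner ℝ (g l x) ((-(α * g i x j)) • EuclideanSpace.single j (1 : ℝ)) : ℝ)
        = -(α * g i x j) * g l x j := by
      rw [real_inner_smul_right]
      have : (inner ℝ (g l x) (EuclideanSpace.single j (1 : ℝ)) : ℝ) = g l x j := by
        simpa using EuclideanSpace.inner_single_right (𝕜 := ℝ) j 1 (g l x)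
      rw [this]
    have hn : ‖(-(α * g i x j)) • EuclideanSpace.single j (1 : ℝ)‖ ^ 2
        = (α * g i x j) ^ 2 := by
      rw [norm_smul]
      simp [mul_pow, sq_abs]
    rw [hin, hn] at h
    linarith
  -- sum over l
  have hsuml : ∀ (i : Fin m) (j : Fin n),
      (∑ l, f l (WithLp.toLp 2 (Function.update x j (x j - α * g i x j)))) ≤
        F - (α * g i x j) * G j + S / 2 * (α * g i x j) ^ 2 := by
    intro i j
    have h1 : (∑ l, f l (WithLp.toLp 2 (Function.update x j (x j - α * g i x j)))) ≤
        ∑ l, (f l x - (α * g i x j) * g l x j + L l / 2 * (α * g i x j) ^ 2) :=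
      Finset.sum_le_sum fun l _ => hdes i j l
    have h2 : ∑ l, (f l x - (α * g i x j) * g l x j + L l / 2 * (α * g i x j) ^ 2)
        = F - (α * g i x j) * G j + S / 2 * (α * g i x j) ^ 2 := by
      rw [Finset.sum_add_distrib, Finset.sum_sub_distrib, ← Finset.mul_sum,
        ← Finset.sum_mul, hG, WithLp.ofLp_sum, Finset.sum_apply, hF, hS, Finset.sum_div]
    linarith [h1, h2.le]
  -- double sum
  have hGj : ∀ j, G j = ∑ i, g i x j := by
    intro j
    rw [hG]
    simp [WithLp.ofLp_sum]
  have hT : (∑ i, ∑ j, (∑ l, f l (WithLp.toLp 2 (Function.update x j (x j - α * g i x j))))) ≤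
      (m : ℝ) * n * F - α * (∑ j, (G j) ^ 2) + S / 2 * α ^ 2 * (∑ i, ∑ j, (g i x j) ^ 2) := by
    have h1 : (∑ i, ∑ j, (∑ l, f l (WithLp.toLp 2 (Function.update x j (x j - α * g i x j))))) ≤
        ∑ i : Fin m, ∑ j : Fin n, (F - (α * g i x j) * G j + S / 2 * (α * g i x j) ^ 2) :=
      Finset.sum_le_sum fun i _ => Finset.sum_le_sum fun j _ => hsuml i j
    have h2 : (∑ i : Fin m, ∑ j : Fin n, (F - (α * g i x j) * G j + S / 2 * (α * g i x j) ^ 2))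
        = (m : ℝ) * n * F - α * (∑ j, (G j) ^ 2) + S / 2 * α ^ 2 * (∑ i, ∑ j, (g i x j) ^ 2) := by
      have e1 : ∀ (i : Fin m) (j : Fin n),
          F - (α * g i x j) * G j + S / 2 * (α * g i x j) ^ 2
          = F - α * (g i x j * G j) + S / 2 * α ^ 2 * (g i x j) ^ 2 := by
        intro i j; ring
      simp only [e1]
      rw [Finset.sum_comm (s := Finset.univ) (t := Finset.univ)
        (f := fun i j => F - α * (g i x j * G j) + S / 2 * α ^ 2 * (g i x j) ^ 2)]
      simp only [Finset.sum_add_distrib, Finset.sum_sub_distrib, ← Finset.mul_sum,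
        Finset.sum_const, Finset.card_univ, Fintype.card_fin, nsmul_eq_mul]
      rw [Finset.sum_comm (s := Finset.univ) (t := Finset.univ)
        (f := fun j i => (g i x j) ^ 2)]
      have e2 : ∀ j : Fin n, (∑ i, g i x j * G j) = (G j) ^ 2 := by
        intro j
        rw [← Finset.sum_mul, ← hGj j, sq]
      simp only [e2]
      push_cast
      ring
    linarith [h1, h2.le]
  -- bound sum of squared gradients
  have hSG : (∑ i, ∑ j, (g i x j) ^ 2) ≤ Q2 * t ^ 2 := by
    have h1 : ∀ i : Fin m, (∑ j, (g i x j) ^ 2) ≤ (L i) ^ 2 * t ^ 2 := by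
      intro i
      rw [← hnorm (g i x)]
      calc ‖g i x‖ ^ 2 ≤ (L i * t) ^ 2 := by
            apply sq_le_sq'
            · nlinarith [norm_nonneg (g i x), hgb i]
            · exact hgb i
        _ = (L i) ^ 2 * t ^ 2 := by ring
    calc (∑ i, ∑ j, (g i x j) ^ 2) ≤ ∑ i, (L i) ^ 2 * t ^ 2 :=
          Finset.sum_le_sum fun i _ => h1 i
      _ = Q2 * t ^ 2 := by rw [hQ2, Finset.sum_mul]
  -- norm of G
  have hNG : (∑ j, (G j) ^ 2) = ‖G‖ ^ 2 := (hnorm G).symm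
  -- quasi strong convexity consequence
  have hqsc' : F ≤ ‖G‖ * t - γ / 2 * t ^ 2 := by
    have h1 : (inner ℝ G (x - xstar) : ℝ) ≤ ‖G‖ * ‖x - xstar‖ := real_inner_le_norm _ _
    rw [hmin, sub_zero] at hqsc
    calc F ≤ (inner ℝ G (x - xstar) : ℝ) - γ / 2 * ‖x - xstar‖ ^ 2 := hqsc
      _ ≤ ‖G‖ * t - γ / 2 * t ^ 2 := by rw [ht]; linarith
  -- final scalar inequality
  have hkey : (∑ i, ∑ j, (∑ l, f l (WithLp.toLp 2 (Function.update x j (x j - α * g i x j))))) ≤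
      (m : ℝ) * n * F - α * γ * F := by
    have hG0 : (0:ℝ) ≤ ‖G‖ := norm_nonneg _
    have hmain : S / 2 * α ^ 2 * (Q2 * t ^ 2) ≤ α * ‖G‖ ^ 2 - α * γ * F := by
      nlinarith [sq_nonneg (‖G‖ - γ * t / 2), mul_pos hα hγ,
        mul_le_mul_of_nonneg_left hqsc' (le_of_lt (mul_pos hα hγ)),
        mul_le_mul_of_nonneg_right hstep (mul_nonneg (mul_nonneg hα.le hα.le) (sq_nonneg t))]
    have h2 : S / 2 * α ^ 2 * (∑ i, ∑ j, (g i x j) ^ 2) ≤ S / 2 * α ^ 2 * (Q2 * t ^ 2) :=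
      mul_le_mul_of_nonneg_left hSG (by positivity)
    have := hT
    rw [hNG] at this
    linarith
  -- divide by m * n
  rcases eq_or_lt_of_le (by positivity : (0:ℝ) ≤ (m : ℝ) * n) with hmn | hmn
  · rw [show ((m : ℝ) * n) = 0 from hmn.symm, div_zero, div_zero, zero_mul, sub_zero, one_mul]
    exact hF0
  · have h2 : (1 - α * γ / ((m : ℝ) * n)) * F
        = (1 / ((m : ℝ) * n)) * ((m : ℝ) * n * F - α * γ * F) := by
      rw [one_div, mul_sub, ← mul_assoc, inv_mul_cancel₀ hmn.ne']
      ring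
    rw [h2]
    exact mul_le_mul_of_nonneg_left hkey (one_div_nonneg.mpr hmn.le)
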